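/- Assume γ ≥ β ≥ α. Then the maximum of T₂ over the interval [0, α/2] equals α/2 + max{γ, α/2 + β} (attained at x = 0 when γ ≥ α/2 + β and at x = α/2 when γ ≤ α/2 + β), and the minimum of T₂ over [0, α/2] equals (α + β + γ)/2, attained at x = (γ − β)/2. -/

import Mathlib

open Set

noncomputable section

/-- `AR₂(x) = √(β² + (2x − γ)² − 2β(2x − γ)·cos C)`, where
`cos C = (α² + β² − γ²)/(2αβ)` by the Cosine Law. -/
def AR2 (α β γ : ℝ) (x : ℝ) : ℝ :=
  Real.sqrt (β ^ 2 + (2 * x - γ) ^ 2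
    - 2 * β * (2 * x - γ) * ((α ^ 2 + β ^ 2 - γ ^ 2) / (2 * α * β)))

/-- `CR₁(x) = √(β² + (γ − 2x)² − 2β(γ − 2x)·cos A)`, where
`cos A = (β² + γ² − α²)/(2βγ)` by the Cosine Law. -/
def CR1 (α β γ : ℝ) (x : ℝ) : ℝ :=
  Real.sqrt (β ^ 2 + (γ - 2 * x) ^ 2
    - 2 * β * (γ - 2 * x) * ((β ^ 2 + γ ^ 2 - α ^ 2) / (2 * β * γ)))

/-- Worst-case evacuation cost of OppositeSearch in Configuration 1. -/
def T1 (α β γ : ℝ) (x : ℝ) : ℝ :=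
  α / 2 + γ - x + max (AR2 α β γ x) (max β (2 * x - γ))

/-- Worst-case evacuation cost of OppositeSearch in Configuration 2. -/
def T2 (α β γ : ℝ) (x : ℝ) : ℝ :=
  α / 2 + x + max (CR1 α β γ x) (max β (γ - 2 * x))

/-- Case `γ ≥ β ≥ α`, Configuration 2: the maximum of `T₂` over `[0, α/2]` is
`α/2 + max {γ, α/2 + β}` (attained at `x = 0` when `γ ≥ α/2 + β` and at
`x = α/2` when `γ ≤ α/2 + β`), and the minimum of `T₂` over `[0, α/2]` is
`(α + β + γ)/2`, attained at `x = (γ − β)/2`. -/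
theorem stmt18 (α β γ : ℝ) (hα : 0 < α) (hβ : 0 < β) (hγ : 0 < γ)
    (h1 : α < β + γ) (h2 : β < α + γ) (h3 : γ < α + β)
    (h4 : α ^ 2 ≤ β ^ 2 + γ ^ 2) (h5 : β ^ 2 ≤ α ^ 2 + γ ^ 2)
    (h6 : γ ^ 2 ≤ α ^ 2 + β ^ 2)
    (hγβ : β ≤ γ) (hβα : α ≤ β) :
    IsGreatest (T2 α β γ '' Icc 0 (α / 2)) (α / 2 + max γ (α / 2 + β)) ∧
      (α / 2 + β ≤ γ → T2 α β γ 0 = α / 2 + max γ (α / 2 + β)) ∧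
      (γ ≤ α / 2 + β → T2 α β γ (α / 2) = α / 2 + max γ (α / 2 + β)) ∧
      IsLeast (T2 α β γ '' Icc 0 (α / 2)) ((α + β + γ) / 2) ∧
      (γ - β) / 2 ∈ Icc 0 (α / 2) ∧
      T2 α β γ ((γ - β) / 2) = (α + β + γ) / 2 := by
  -- main simplification: on [0, α/2], T2 x = α/2 + x + max β (γ - 2x)
  have hT : ∀ x ∈ Icc (0:ℝ) (α / 2), T2 α β γ x = α / 2 + x + max β (γ - 2 * x) := by
    intro x hx
    obtain ⟨hx0, hx1⟩ := hx
    have ht0 : 0 ≤ γ - 2 * x := by linarith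
    have hE : β ^ 2 + (γ - 2 * x) ^ 2
        - 2 * β * (γ - 2 * x) * ((β ^ 2 + γ ^ 2 - α ^ 2) / (2 * β * γ))
        = β ^ 2 + (γ - 2 * x) ^ 2 - (γ - 2 * x) * (β ^ 2 + γ ^ 2 - α ^ 2) / γ := by
      field_simp
    have hCR : CR1 α β γ x ≤ max β (γ - 2 * x) := by
      rw [CR1, hE]
      have hmax0 : (0:ℝ) ≤ max β (γ - 2 * x) := le_max_of_le_left hβ.le
      have hE2 : β ^ 2 + (γ - 2 * x) ^ 2 - (γ - 2 * x) * (β ^ 2 + γ ^ 2 - α ^ 2) / γ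
          ≤ (max β (γ - 2 * x)) ^ 2 := by
        rcases le_total (γ - 2 * x) β with h | h
        · rw [max_eq_left h]
          have hdiv : (γ - 2 * x) ^ 2 ≤ (γ - 2 * x) * (β ^ 2 + γ ^ 2 - α ^ 2) / γ := by
            rw [le_div_iff₀ hγ]
            nlinarith [mul_nonneg ht0 (sub_nonneg.mpr (show (γ - 2 * x) * γ ≤ β ^ 2 + γ ^ 2 - α ^ 2 by nlinarith))]
          linarith
        · rw [max_eq_right h]
          have hdiv : β ^ 2 ≤ (γ - 2 * x) * (β ^ 2 + γ ^ 2 - α ^ 2) / γ := by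
            rw [le_div_iff₀ hγ]
            nlinarith [mul_le_mul_of_nonneg_right h (show (0:ℝ) ≤ β ^ 2 + γ ^ 2 - α ^ 2 by nlinarith), mul_le_mul_of_nonneg_left (show γ ^ 2 ≤ β ^ 2 + γ ^ 2 - α ^ 2 by nlinarith) hβ.le, mul_le_mul_of_nonneg_left hγβ (mul_pos hβ hγ).le]
          linarith
      calc Real.sqrt (β ^ 2 + (γ - 2 * x) ^ 2 - (γ - 2 * x) * (β ^ 2 + γ ^ 2 - α ^ 2) / γ)
          ≤ Real.sqrt ((max β (γ - 2 * x)) ^ 2) := Real.sqrt_le_sqrt hE2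
        _ = max β (γ - 2 * x) := by rw [Real.sqrt_sq hmax0]
    rw [T2, max_eq_right hCR]
  have hIcc0 : (0:ℝ) ∈ Icc (0:ℝ) (α / 2) := ⟨le_refl _, by linarith⟩
  have hIcc1 : α / 2 ∈ Icc (0:ℝ) (α / 2) := ⟨by linarith, le_refl _⟩
  have hIccm : (γ - β) / 2 ∈ Icc (0:ℝ) (α / 2) := ⟨by linarith, by linarith⟩
  have hT0 : T2 α β γ 0 = α / 2 + γ := by
    rw [hT 0 hIcc0, max_eq_right (by linarith : β ≤ γ - 2 * 0)]; ring
  have hT1 : T2 α β γ (α / 2) = α + β := by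
    rw [hT (α / 2) hIcc1, max_eq_left (by linarith : γ - 2 * (α / 2) ≤ β)]; ring
  have hTm : T2 α β γ ((γ - β) / 2) = (α + β + γ) / 2 := by
    rw [hT _ hIccm, max_eq_left (by linarith : γ - 2 * ((γ - β) / 2) ≤ β)]; ring
  refine ⟨⟨?_, ?_⟩, ?_, ?_, ⟨⟨_, hIccm, hTm⟩, ?_⟩, hIccm, hTm⟩
  · rcases le_total γ (α / 2 + β) with h | h
    · exact ⟨α / 2, hIcc1, by rw [hT1, max_eq_right h]; ring⟩
    · exact ⟨0, hIcc0, by rw [hT0, max_eq_left h]⟩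
  · rintro y ⟨x, hx, rfl⟩
    rw [hT x hx]
    rcases le_total (γ - 2 * x) β with h | h
    · rw [max_eq_left h]
      have := le_max_right γ (α / 2 + β)
      have := hx.2
      linarith
    · rw [max_eq_right h]
      have := le_max_left γ (α / 2 + β)
      have := hx.1
      linarith
  · intro h; rw [hT0, max_eq_left h]
  · intro h; rw [hT1, max_eq_right h]; ring
  · rintro y ⟨x, hx, rfl⟩
    rw [hT x hx]
    rcases le_total (γ - 2 * x) β with h | h
    · rw [max_eq_left h]; linarith
    · rw [max_eq_right h]; linarith
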